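/- For every n ≥ 3 there exists a complete NFA with state set Q = {1,2,…,n} and exactly n(n−1)/2 + 1 symbols such that the shortest word synchronizing the full state set Q has length exactly 2^n − n − 1, and such that for every k with 2 ≤ k ≤ n there is a subset S of size k whose shortest synchronizing word has length exactly 2^n − n − 2^{n−k}. -/

import Mathlib

/-- Action of an NFA transition function on a subset of states along a word. -/
def nfaRun {n m : ℕ} (δ : Fin n → Fin m → Finset (Fin n)) :
    Finset (Fin n) → List (Fin m) → Finset (Fin n)
  | S, [] => S
  | S, a :: w => nfaRun δ (S.biUnion fun q => δ q a) w

/-- A word `w` synchronizes the subset `S` in the NFA `δ`. -/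
def nfaSync {n m : ℕ} (δ : Fin n → Fin m → Finset (Fin n)) (S : Finset (Fin n))
    (w : List (Fin m)) : Prop :=
  (nfaRun δ S w).card = 1

/-- `l` is the length of a shortest word synchronizing `S` in the NFA `δ`. -/
def nfaShortestSync {n m : ℕ} (δ : Fin n → Fin m → Finset (Fin n)) (S : Finset (Fin n))
    (l : ℕ) : Prop :=
  (∃ w, nfaSync δ S w ∧ w.length = l) ∧ ∀ w, nfaSync δ S w → l ≤ w.length

namespace S3
open Finset
variable {n : ℕ}



/-! ### Nat-side values -/

def Good (u : ℕ) : Prop := u ≠ 0 ∧ ∀ k ≤ u, u ≠ 2 ^ k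

instance : DecidablePred Good := fun u => by unfold Good; infer_instance

lemma not_good_pow (k : ℕ) : ¬ Good (2 ^ k) := fun h => h.2 k (Nat.lt_two_pow_self (n := k)).le rfl

lemma one_le_two_pow' (k : ℕ) : 1 ≤ 2 ^ k := Nat.one_le_two_pow

lemma good_of_between {b u : ℕ} (h1 : 2 ^ b < u) (h2 : u < 2 ^ (b + 1)) : Good u := by
  constructor
  · have := one_le_two_pow' b; omega
  · intro k hk he
    subst he
    have hb : b < k := (Nat.pow_lt_pow_iff_right (by norm_num)).mp h1
    have hk2 : k < b + 1 := (Nat.pow_lt_pow_iff_right (by norm_num)).mp h2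
    omega

def phiN (m : ℕ) : ℕ := ((Finset.Icc 1 m).filter Good).card

lemma phiN_succ (m : ℕ) : phiN (m + 1) = phiN m + if Good (m + 1) then 1 else 0 := by
  unfold phiN
  have hins : Finset.Icc 1 (m + 1) = insert (m + 1) (Finset.Icc 1 m) := by
    ext u; simp only [Finset.mem_Icc, Finset.mem_insert]; omega
  rw [hins, Finset.filter_insert]
  split
  · rw [Finset.card_insert_of_notMem (by simp only [Finset.mem_filter, Finset.mem_Icc]; omega)]
  · simp

lemma phiN_mono : Monotone phiN := fun a b h =>
  Finset.card_le_card (Finset.filter_subset_filter _ (Finset.Icc_subset_Icc_right h))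

lemma phiN_le_succ (m : ℕ) : phiN (m + 1) ≤ phiN m + 1 := by
  rw [phiN_succ]; split <;> omega

lemma phiN_le_of {a b : ℕ} (h : a ≤ b + 1) : phiN a ≤ phiN b + 1 :=
  (phiN_mono h).trans (phiN_le_succ b)

lemma phiN_step {a b : ℕ} (h : a + 1 = b) (hG : Good b) : phiN b = phiN a + 1 := by
  subst h; rw [phiN_succ, if_pos hG]

lemma phiN_dstep {t : ℕ} (hG : Good (2 ^ t + 1)) : phiN (2 ^ t + 1) = phiN (2 ^ t - 1) + 1 := by
  have he : (2 ^ t - 1) + 1 = 2 ^ t := by have := one_le_two_pow' t; omega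
  have h1 : phiN (2 ^ t + 1) = phiN (2 ^ t) + 1 := by rw [phiN_succ, if_pos hG]
  have h3 : phiN (2 ^ t) = phiN (2 ^ t - 1) := by
    conv_lhs => rw [← he]
    rw [phiN_succ, he, if_neg (not_good_pow t)]
    omega
  omega

lemma phiN_zero : phiN 0 = 0 := by
  unfold phiN
  rw [show Finset.Icc 1 0 = ∅ from Finset.Icc_eq_empty (by omega)]
  simp

lemma phiN_three : phiN 3 = 1 := by
  have h1 : phiN 1 = 0 := by
    rw [show (1 : ℕ) = 0 + 1 from rfl, phiN_succ, phiN_zero,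
      if_neg (by simpa using not_good_pow 0)]
  have h2 : phiN 2 = 0 := by
    rw [show (2 : ℕ) = 1 + 1 from rfl, phiN_succ, h1,
      if_neg (by simpa using not_good_pow 1)]
  have h3 : Good 3 := good_of_between (b := 1) (by norm_num) (by norm_num)
  rw [show (3 : ℕ) = 2 + 1 from rfl, phiN_succ, h2, if_pos h3]

lemma phiN_high {n v : ℕ} (hn : 1 ≤ n) (h1 : 2 ^ (n - 1) ≤ v) (h2 : v < 2 ^ n) :
    phiN v = v - n := by
  have key : (Finset.Icc 1 v).filter (fun u => ¬ Good u) = (Finset.range n).image (2 ^ ·) := by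
    ext u
    simp only [Finset.mem_filter, Finset.mem_Icc, Finset.mem_image, Finset.mem_range]
    constructor
    · rintro ⟨⟨h1u, h2u⟩, hng⟩
      rw [Good] at hng; push_neg at hng
      obtain ⟨k, -, hk⟩ := hng (by omega)
      refine ⟨k, ?_, hk.symm⟩
      have : 2 ^ k < 2 ^ n := by omega
      exact (Nat.pow_lt_pow_iff_right (by norm_num)).mp this
    · rintro ⟨k, hkn, rfl⟩
      have hle : 2 ^ k ≤ 2 ^ (n - 1) := Nat.pow_le_pow_right (by norm_num) (by omega)
      exact ⟨⟨Nat.one_le_two_pow, by omega⟩, not_good_pow k⟩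
  have hcnt : ((Finset.Icc 1 v).filter (fun u => ¬ Good u)).card = n := by
    rw [key, Finset.card_image_of_injective _ (Nat.pow_right_injective (le_refl 2)),
      Finset.card_range]
  have hsum := Finset.card_filter_add_card_filter_not (s := Finset.Icc 1 v) (p := Good)
  have hIcc : (Finset.Icc 1 v).card = v := by rw [Nat.card_Icc]; omega
  unfold phiN
  omega


def valN (A : Finset ℕ) : ℕ := ∑ i ∈ A, 2 ^ i

lemma sum_range_pow (b : ℕ) : valN (Finset.range b) = 2 ^ b - 1 := by
  unfold valN
  induction b with
  | zero => simp
  | succ b ih =>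
    rw [Finset.sum_range_succ, ih]
    have := Nat.one_le_two_pow (n := b)
    have : 2 ^ (b + 1) = 2 ^ b + 2 ^ b := by ring
    omega

lemma valN_mono {A B : Finset ℕ} (h : A ⊆ B) : valN A ≤ valN B :=
  Finset.sum_le_sum_of_subset h

lemma valN_lt {A : Finset ℕ} {b : ℕ} (h : A ⊆ Finset.range b) : valN A < 2 ^ b := by
  have h1 := valN_mono h
  rw [sum_range_pow] at h1
  have := Nat.one_le_two_pow (n := b)
  omega

lemma two_pow_le_valN {A : Finset ℕ} {i : ℕ} (h : i ∈ A) : 2 ^ i ≤ valN A :=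
  Finset.single_le_sum (fun _ _ => Nat.zero_le _) h

lemma valN_erase {A : Finset ℕ} {i : ℕ} (h : i ∈ A) : valN (A.erase i) + 2 ^ i = valN A :=
  Finset.sum_erase_add _ _ h

lemma valN_pair {a b : ℕ} (h : a ≠ b) : valN {a, b} = 2 ^ a + 2 ^ b := by
  unfold valN; rw [Finset.sum_pair h]

lemma good_valN {A : Finset ℕ} {a c : ℕ} (ha : a ∈ A) (hc : c ∈ A) (hne : a ≠ c) :
    Good (valN A) := by
  have hAne : A.Nonempty := ⟨a, ha⟩
  set M := A.max' hAne with hM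
  have hMA : M ∈ A := A.max'_mem hAne
  have hub : ∀ i ∈ A, i ≤ M := fun i hi => A.le_max' i hi
  -- pick an element distinct from M
  obtain ⟨x, hx, hxM⟩ : ∃ x ∈ A, x ≠ M := by
    rcases eq_or_ne a M with h | h
    · exact ⟨c, hc, by omega⟩
    · exact ⟨a, ha, h⟩
  have hxe : x ∈ A.erase M := Finset.mem_erase.mpr ⟨hxM, hx⟩
  have hlow : 2 ^ M < valN A := by
    have h1 : 2 ^ x ≤ valN (A.erase M) := two_pow_le_valN hxe
    have h2 := valN_erase hMA
    have := Nat.one_le_two_pow (n := x)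
    omega
  have hhigh : valN A < 2 ^ (M + 1) := by
    apply valN_lt
    intro i hi
    simp only [Finset.mem_range]
    exact Nat.lt_succ_of_le (hub i hi)
  exact good_of_between hlow hhigh

/-! ### values of Fin subsets -/


def fval (S : Finset (Fin n)) : ℕ := valN (S.image Fin.val)

lemma mem_image_val {S : Finset (Fin n)} {q : Fin n} : (q : ℕ) ∈ S.image Fin.val ↔ q ∈ S := by
  constructor
  · intro h
    obtain ⟨x, hx, hxq⟩ := Finset.mem_image.mp h
    rwa [show x = q from Fin.val_injective hxq] at hx
  · exact fun h => Finset.mem_image_of_mem _ h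

lemma fval_mono {S T : Finset (Fin n)} (h : S ⊆ T) : fval S ≤ fval T :=
  valN_mono (Finset.image_subset_image h)

lemma fval_lt (S : Finset (Fin n)) : fval S < 2 ^ n := by
  apply valN_lt
  intro i hi
  obtain ⟨x, -, rfl⟩ := Finset.mem_image.mp hi
  simpa using x.isLt

lemma two_pow_le_fval {S : Finset (Fin n)} {q : Fin n} (h : q ∈ S) : 2 ^ (q : ℕ) ≤ fval S :=
  two_pow_le_valN (mem_image_val.mpr h)

lemma fval_erase {S : Finset (Fin n)} {q : Fin n} (h : q ∈ S) :
    fval (S.erase q) + 2 ^ (q : ℕ) = fval S := by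
  unfold fval
  rw [Finset.image_erase Fin.val_injective]
  exact valN_erase (mem_image_val.mpr h)

lemma good_fval {S : Finset (Fin n)} (h2 : 2 ≤ S.card) : Good (fval S) := by
  obtain ⟨a, ha, b, hb, hab⟩ := Finset.one_lt_card.mp (show 1 < S.card by omega)
  exact good_valN (mem_image_val.mpr ha) (mem_image_val.mpr hb)
    (fun h => hab (Fin.val_injective h))

/-! ### low / high subsets -/

def low (n b : ℕ) : Finset (Fin n) := Finset.univ.filter (fun x => (x : ℕ) < b)
def high (n b : ℕ) : Finset (Fin n) := Finset.univ.filter (fun x => b ≤ (x : ℕ))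

lemma mem_low {b : ℕ} {x : Fin n} : x ∈ low n b ↔ (x : ℕ) < b := by simp [low]
lemma mem_high {b : ℕ} {x : Fin n} : x ∈ high n b ↔ b ≤ (x : ℕ) := by simp [high]

lemma image_val_low {b : ℕ} (hb : b ≤ n) : (low n b).image Fin.val = Finset.range b := by
  ext i
  simp only [Finset.mem_image, Finset.mem_range]
  constructor
  · rintro ⟨x, hx, rfl⟩; exact mem_low.mp hx
  · intro hi; exact ⟨⟨i, by omega⟩, mem_low.mpr hi, rfl⟩

lemma image_val_high {b : ℕ} : (high n b).image Fin.val = Finset.Ico b n := by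
  ext i
  simp only [Finset.mem_image, Finset.mem_Ico]
  constructor
  · rintro ⟨x, hx, rfl⟩; exact ⟨mem_high.mp hx, x.isLt⟩
  · intro hi; exact ⟨⟨i, hi.2⟩, mem_high.mpr hi.1, rfl⟩

lemma fval_low {b : ℕ} (hb : b ≤ n) : fval (low n b) = 2 ^ b - 1 := by
  unfold fval; rw [image_val_low hb, sum_range_pow]

lemma low_univ : low n n = Finset.univ := by
  ext x; simp [mem_low, x.isLt]

lemma fval_univ : fval (Finset.univ : Finset (Fin n)) = 2 ^ n - 1 := by
  rw [← low_univ, fval_low le_rfl]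

lemma card_low {b : ℕ} (hb : b ≤ n) : (low n b).card = b := by
  have h := Finset.card_image_of_injective (low n b) Fin.val_injective
  rw [image_val_low hb, Finset.card_range] at h
  omega

lemma card_high (b : ℕ) : (high n b).card = n - b := by
  have h := Finset.card_image_of_injective (high n b) Fin.val_injective
  rw [image_val_high, Nat.card_Ico] at h
  omega

lemma fval_high {b : ℕ} (hb : b ≤ n) : fval (high n b) = 2 ^ n - 2 ^ b := by
  unfold fval
  rw [image_val_high]
  have hsplit : valN (Finset.range b) + (∑ i ∈ Finset.Ico b n, 2 ^ i) = valN (Finset.range n) := by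
    unfold valN
    rw [Finset.range_eq_Ico, Finset.range_eq_Ico]
    exact Finset.sum_Ico_consecutive (fun i => (2 : ℕ) ^ i) (Nat.zero_le b) hb
  rw [sum_range_pow, sum_range_pow] at hsplit
  have h1 := Nat.one_le_two_pow (n := b)
  have h2 : 2 ^ b ≤ 2 ^ n := Nat.pow_le_pow_right (by norm_num) hb
  unfold valN
  omega

lemma fval_pair {a b : Fin n} (h : a ≠ b) : fval ({a, b} : Finset (Fin n)) = 2 ^ (a:ℕ) + 2 ^ (b:ℕ) := by
  unfold fval
  rw [Finset.image_insert, Finset.image_singleton]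
  exact valN_pair (fun hv => h (Fin.val_injective hv))

lemma fval_union {S T : Finset (Fin n)} (h : Disjoint S T) : fval (S ∪ T) = fval S + fval T := by
  unfold fval
  rw [Finset.image_union]
  exact Finset.sum_union ((Finset.disjoint_image Fin.val_injective).mpr h)




def c1Spec (o : Fin n) : Fin n → Finset (Fin n) := fun q => if (q : ℕ) = 0 then {o} else {q}
def cSpec (s t : Fin n) : Fin n → Finset (Fin n) := fun q => if (q : ℕ) = 0 then {s, t} else {q}
def dSpec (t : Fin n) : Fin n → Finset (Fin n) :=
  fun q => if (q : ℕ) = 0 then {q} else if q = t then low n (t : ℕ) else Finset.univ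
def bSpec (n l : ℕ) : Fin n → Finset (Fin n) :=
  fun q => if (q : ℕ) < l then Finset.univ else if (q : ℕ) = l then low n l else {q}

lemma biUnion_id_of {S : Finset (Fin n)} {f : Fin n → Finset (Fin n)}
    (h : ∀ q ∈ S, f q = {q}) : S.biUnion f = S := by
  ext x
  simp only [Finset.mem_biUnion]
  constructor
  · rintro ⟨q, hq, hx⟩
    rw [h q hq, Finset.mem_singleton] at hx
    subst hx; exact hq
  · intro hx; exact ⟨x, hx, by rw [h x hx]; simp⟩

lemma biUnion_univ_of {S : Finset (Fin n)} {f : Fin n → Finset (Fin n)} {q : Fin n}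
    (hq : q ∈ S) (h : f q = Finset.univ) : S.biUnion f = Finset.univ := by
  apply Finset.eq_univ_of_forall
  intro x
  exact Finset.mem_biUnion.mpr ⟨q, hq, by rw [h]; exact Finset.mem_univ x⟩

lemma val_eq_zero_eq {q0 q : Fin n} (h0 : (q0 : ℕ) = 0) (h : (q : ℕ) = 0) : q = q0 :=
  Fin.val_injective (by omega)

lemma biUnion_c1 {S : Finset (Fin n)} {q0 o : Fin n} (hq0 : q0 ∈ S) (h0 : (q0 : ℕ) = 0) :
    S.biUnion (c1Spec o) = S.erase q0 ∪ {o} := by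
  ext x
  simp only [Finset.mem_biUnion, Finset.mem_union, Finset.mem_erase, Finset.mem_singleton, c1Spec]
  constructor
  · rintro ⟨q, hq, hx⟩
    by_cases hqz : (q : ℕ) = 0
    · rw [if_pos hqz] at hx; right; simpa using hx
    · rw [if_neg hqz] at hx
      simp only [Finset.mem_singleton] at hx
      subst hx
      exact Or.inl ⟨fun he => hqz (he ▸ h0), hq⟩
  · rintro (⟨hne, hx⟩ | rfl)
    · refine ⟨x, hx, ?_⟩
      have : (x : ℕ) ≠ 0 := fun h => hne (val_eq_zero_eq h0 h)
      rw [if_neg this]; simp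
    · exact ⟨q0, hq0, by rw [if_pos h0]; simp⟩

lemma biUnion_c {S : Finset (Fin n)} {q0 s t : Fin n} (hq0 : q0 ∈ S) (h0 : (q0 : ℕ) = 0) :
    S.biUnion (cSpec s t) = S.erase q0 ∪ {s, t} := by
  ext x
  simp only [Finset.mem_biUnion, Finset.mem_union, Finset.mem_erase, Finset.mem_insert,
    Finset.mem_singleton, cSpec]
  constructor
  · rintro ⟨q, hq, hx⟩
    by_cases hqz : (q : ℕ) = 0
    · rw [if_pos hqz] at hx
      simp only [Finset.mem_insert, Finset.mem_singleton] at hx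
      exact Or.inr hx
    · rw [if_neg hqz] at hx
      simp only [Finset.mem_singleton] at hx
      subst hx
      exact Or.inl ⟨fun he => hqz (he ▸ h0), hq⟩
  · rintro (⟨hne, hx⟩ | hx)
    · refine ⟨x, hx, ?_⟩
      have : (x : ℕ) ≠ 0 := fun h => hne (val_eq_zero_eq h0 h)
      rw [if_neg this]; simp
    · exact ⟨q0, hq0, by rw [if_pos h0]; simpa using hx⟩

lemma biUnion_d_pair {q0 t : Fin n} (h0 : (q0 : ℕ) = 0) (ht : 2 ≤ (t : ℕ)) :
    ({q0, t} : Finset (Fin n)).biUnion (dSpec t) = low n (t : ℕ) := by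
  have hne : q0 ≠ t := fun h => by rw [h] at h0; omega
  rw [Finset.biUnion_insert, Finset.singleton_biUnion]
  have h1 : dSpec t q0 = {q0} := by rw [dSpec, if_pos h0]
  have h2 : dSpec t t = low n (t : ℕ) := by
    rw [dSpec, if_neg (by omega : ¬ (t : ℕ) = 0), if_pos rfl]
  rw [h1, h2]
  apply Finset.union_eq_right.mpr
  intro x hx
  simp only [Finset.mem_singleton] at hx
  subst hx
  exact mem_low.mpr (by omega)

lemma biUnion_b {S : Finset (Fin n)} {l : ℕ} (hl : l < n)
    (hmem : (⟨l, hl⟩ : Fin n) ∈ S) (hmin : ∀ q ∈ S, l ≤ (q : ℕ)) :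
    S.biUnion (bSpec n l) = S.erase ⟨l, hl⟩ ∪ low n l := by
  ext x
  simp only [Finset.mem_biUnion, Finset.mem_union, Finset.mem_erase, bSpec]
  constructor
  · rintro ⟨q, hq, hx⟩
    have h1 : ¬ (q : ℕ) < l := by have := hmin q hq; omega
    rw [if_neg h1] at hx
    by_cases h2 : (q : ℕ) = l
    · rw [if_pos h2] at hx; right; exact hx
    · rw [if_neg h2] at hx
      simp only [Finset.mem_singleton] at hx
      subst hx
      exact Or.inl ⟨fun he => h2 (by rw [he]), hq⟩
  · rintro (⟨hne, hx⟩ | hx)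
    · refine ⟨x, hx, ?_⟩
      have hge := hmin x hx
      have hxl : (x : ℕ) ≠ l := fun he => hne (Fin.val_injective he)
      rw [if_neg (by omega), if_neg hxl]; simp
    · refine ⟨⟨l, hl⟩, hmem, ?_⟩
      rw [if_neg (by simp), if_pos (by simp)]
      exact hx



/-! ### the alphabet -/

def T (n : ℕ) : Type := (Σ i : Fin n, Fin (i : ℕ)) ⊕ Unit

instance : Fintype (T n) := by unfold T; infer_instance

lemma card_T : Fintype.card (T n) = n * (n - 1) / 2 + 1 := by
  unfold T
  rw [Fintype.card_sum, Fintype.card_sigma]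
  simp only [Fintype.card_fin, Fintype.card_unit]
  rw [Fin.sum_univ_eq_sum_range (fun i => i)]
  have h := Finset.sum_range_id_mul_two n
  omega

def pairSpec (i : Fin n) (j : Fin (i : ℕ)) : Fin n → Finset (Fin n) :=
  if (j : ℕ) = 0 then (if (i : ℕ) = 1 then c1Spec i else dSpec i)
  else if (j : ℕ) = 1 then bSpec n ((i : ℕ) - 1)
  else cSpec ⟨(j : ℕ), lt_trans j.isLt i.isLt⟩ i

def decode (x : T n) : Fin n → Finset (Fin n) :=
  match x with
  | Sum.inr _ => fun q => {q}
  | Sum.inl ⟨i, j⟩ => pairSpec i j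

lemma decode_inl {i : Fin n} {j : Fin (i : ℕ)} :
    decode (Sum.inl ⟨i, j⟩) = pairSpec i j := rfl

lemma pairSpec_c1 {i : Fin n} (j : Fin (i : ℕ)) (hj : (j : ℕ) = 0) (hi : (i : ℕ) = 1) :
    pairSpec i j = c1Spec i := by
  unfold pairSpec; rw [if_pos hj, if_pos hi]

lemma pairSpec_d {i : Fin n} (j : Fin (i : ℕ)) (hj : (j : ℕ) = 0) (hi : (i : ℕ) ≠ 1) :
    pairSpec i j = dSpec i := by
  unfold pairSpec; rw [if_pos hj, if_neg hi]

lemma pairSpec_b {i : Fin n} (j : Fin (i : ℕ)) (hj : (j : ℕ) = 1) :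
    pairSpec i j = bSpec n ((i : ℕ) - 1) := by
  unfold pairSpec; rw [if_neg (by omega), if_pos hj]

lemma pairSpec_c {i : Fin n} (j : Fin (i : ℕ)) (hj : 2 ≤ (j : ℕ)) :
    pairSpec i j = cSpec ⟨(j : ℕ), lt_trans j.isLt i.isLt⟩ i := by
  unfold pairSpec; rw [if_neg (by omega), if_neg (by omega)]

noncomputable def eqv (n : ℕ) : T n ≃ Fin (n * (n - 1) / 2 + 1) :=
  Fintype.equivFinOfCardEq card_T

noncomputable def delta (n : ℕ) : Fin n → Fin (n * (n - 1) / 2 + 1) → Finset (Fin n) :=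
  fun q a => decode ((eqv n).symm a) q

lemma delta_encode (x : T n) (q : Fin n) : delta n q (eqv n x) = decode x q := by
  unfold delta; rw [Equiv.symm_apply_apply]

lemma biUnion_delta_encode (x : T n) (S : Finset (Fin n)) :
    (S.biUnion fun q => delta n q (eqv n x)) = S.biUnion (decode x) :=
  Finset.biUnion_congr rfl (fun q _ => delta_encode x q)

lemma low_nonempty (hn : 0 < n) {b : ℕ} (hb : 0 < b) : (low n b).Nonempty :=
  ⟨⟨0, hn⟩, mem_low.mpr (by simpa using hb)⟩

lemma decode_nonempty (hn : 3 ≤ n) (x : T n) (q : Fin n) : (decode x q).Nonempty := by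
  rcases x with ⟨i, j⟩ | u
  · rw [decode_inl]
    have hji := j.isLt
    by_cases hj0 : (j : ℕ) = 0
    · by_cases hi1 : (i : ℕ) = 1
      · rw [pairSpec_c1 j hj0 hi1]; unfold c1Spec; split <;> simp
      · rw [pairSpec_d j hj0 hi1]; unfold dSpec
        have hi2 : 2 ≤ (i : ℕ) := by omega
        split
        · simp
        · split
          · exact low_nonempty (by omega) (by omega)
          · exact ⟨q, Finset.mem_univ q⟩
    · by_cases hj1 : (j : ℕ) = 1
      · rw [pairSpec_b j hj1]; unfold bSpec
        have hi2 : 2 ≤ (i : ℕ) := by omega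
        split
        · exact ⟨q, Finset.mem_univ q⟩
        · split
          · exact low_nonempty (by omega) (by omega)
          · simp
      · rw [pairSpec_c j (by omega)]; unfold cSpec; split <;> simp
  · exact ⟨q, by simp [decode]⟩

/-! ### the potential -/

def phi (S : Finset (Fin n)) : ℕ := phiN (fval S)

lemma phi_le_of {S R : Finset (Fin n)} (h : fval S ≤ fval R + 1) : phi S ≤ phi R + 1 :=
  phiN_le_of h

lemma phi_mono {S R : Finset (Fin n)} (h : fval S ≤ fval R) : phi S ≤ phi R :=
  phiN_mono h

/-! ### safety of every letter -/

lemma card_two_of {S : Finset (Fin n)} {a b : Fin n} (ha : a ∈ S) (hb : b ∈ S) (hab : a ≠ b) :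
    2 ≤ S.card := Finset.one_lt_card.mpr ⟨a, ha, b, hb, hab⟩

lemma safety (hn : 3 ≤ n) (x : T n) (S : Finset (Fin n)) (h2 : 2 ≤ S.card) :
    phi S ≤ phi (S.biUnion (decode x)) + 1 ∧
      ((S.biUnion (decode x)).card = 1 → phi S ≤ 1) := by
  have hz' : (0 : ℕ) < n := by omega
  set z : Fin n := ⟨0, hz'⟩ with hzdef
  rcases x with ⟨i, j⟩ | u
  case inr =>
    have hR : S.biUnion (decode (Sum.inr u)) = S :=
      biUnion_id_of (fun q _ => rfl)
    rw [hR]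
    exact ⟨by omega, fun h1 => by omega⟩
  case inl =>
  rw [decode_inl]
  have hji := j.isLt
  have hin := i.isLt
  by_cases hj0 : (j : ℕ) = 0
  · by_cases hi1 : (i : ℕ) = 1
    · -- c1 letter
      rw [pairSpec_c1 j hj0 hi1]
      by_cases hz : z ∈ S
      · have hR : S.biUnion (c1Spec i) = S.erase z ∪ {i} := biUnion_c1 hz rfl
        rw [hR]
        have he : fval (S.erase z) + 1 = fval S := by
          have := fval_erase hz
          simpa [hzdef] using this
        have hmono : fval (S.erase z) ≤ fval (S.erase z ∪ {i}) :=
          fval_mono Finset.subset_union_left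
        constructor
        · exact phi_le_of (by omega)
        · intro hc
          have hiR : i ∈ S.erase z ∪ {i} := Finset.mem_union_right _ (Finset.mem_singleton_self i)
          obtain ⟨a, haR⟩ := Finset.card_eq_one.mp hc
          have hai : a = i := by
            rw [haR] at hiR
            exact (Finset.mem_singleton.mp hiR).symm
          subst hai
          have hsub : S ⊆ {z, a} := by
            intro q hq
            by_cases hqz : q = z
            · simp [hqz]
            · have : q ∈ S.erase z := Finset.mem_erase.mpr ⟨hqz, hq⟩
              have : q ∈ ({a} : Finset (Fin n)) := by
                rw [← haR]; exact Finset.mem_union_left _ this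
              simp at this
              simp [this]
          have hzi : z ≠ a := by
            intro h
            have : (z : ℕ) = (a : ℕ) := by rw [h]
            simp [hzdef, hi1] at this
          have hcard2 : ({z, a} : Finset (Fin n)).card = 2 := Finset.card_pair hzi
          have hSeq : S = {z, a} := by
            apply Finset.eq_of_subset_of_card_le hsub
            omega
          have hfv : fval S = 3 := by
            rw [hSeq, fval_pair hzi]
            simp [hzdef, hi1]
          unfold phi
          rw [hfv, phiN_three]
      · have hR : S.biUnion (c1Spec i) = S :=
          biUnion_id_of (fun q hq => by
            unfold c1Spec
            rw [if_neg (fun h0 => hz (by rwa [show q = z from Fin.val_injective (by simp [hzdef, h0])] at hq))])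
        rw [hR]
        exact ⟨by omega, fun h1 => by omega⟩
    · -- d letter
      rw [pairSpec_d j hj0 hi1]
      have hi2 : 2 ≤ (i : ℕ) := by omega
      by_cases hout : ∃ q ∈ S, (q : ℕ) ≠ 0 ∧ q ≠ i
      · obtain ⟨q, hq, hq0, hqi⟩ := hout
        have hR : S.biUnion (dSpec i) = Finset.univ := by
          apply biUnion_univ_of hq
          unfold dSpec
          rw [if_neg hq0, if_neg hqi]
        rw [hR]
        constructor
        · have := phi_mono (S := S) (R := (Finset.univ : Finset (Fin n)))
            (fval_mono (Finset.subset_univ S))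
          omega
        · intro hc
          rw [Finset.card_univ, Fintype.card_fin] at hc
          omega
      · push_neg at hout
        have hsub : S ⊆ {z, i} := by
          intro q hq
          by_cases hq0 : (q : ℕ) = 0
          · have : q = z := Fin.val_injective (by simp [hzdef, hq0])
            simp [this]
          · simp [hout q hq hq0]
        have hzi : z ≠ i := by
          intro h
          have : (z : ℕ) = (i : ℕ) := by rw [h]
          simp [hzdef] at this
          omega
        have hSeq : S = {z, i} := by
          apply Finset.eq_of_subset_of_card_le hsub
          rw [Finset.card_pair hzi]; omega
        have hR : S.biUnion (dSpec i) = low n (i : ℕ) := by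
          rw [hSeq]; exact biUnion_d_pair rfl hi2
        rw [hR]
        have hfvS : fval S = 2 ^ (i : ℕ) + 1 := by
          rw [hSeq, fval_pair hzi]
          simp [hzdef]; omega
        have hfvR : fval (low n (i : ℕ)) = 2 ^ (i : ℕ) - 1 := fval_low (le_of_lt hin)
        have hGood : Good (2 ^ (i : ℕ) + 1) := by
          rw [← hfvS]; exact good_fval h2
        have hstep : phi S = phi (low n (i : ℕ)) + 1 := by
          unfold phi
          rw [hfvS, hfvR]
          exact phiN_dstep hGood
        constructor
        · omega
        · intro hc
          rw [card_low (le_of_lt hin)] at hc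
          omega
  · by_cases hj1 : (j : ℕ) = 1
    · -- b letter
      rw [pairSpec_b j hj1]
      set l : ℕ := (i : ℕ) - 1 with hldef
      have hl1 : 1 ≤ l := by omega
      have hln : l < n := by omega
      by_cases hlow : ∃ q ∈ S, (q : ℕ) < l
      · obtain ⟨q, hq, hql⟩ := hlow
        have hR : S.biUnion (bSpec n l) = Finset.univ := by
          apply biUnion_univ_of hq
          unfold bSpec
          rw [if_pos hql]
        rw [hR]
        constructor
        · have := phi_mono (S := S) (R := (Finset.univ : Finset (Fin n)))
            (fval_mono (Finset.subset_univ S))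
          omega
        · intro hc
          rw [Finset.card_univ, Fintype.card_fin] at hc
          omega
      · push_neg at hlow
        by_cases hmem : (⟨l, hln⟩ : Fin n) ∈ S
        · have hR : S.biUnion (bSpec n l) = S.erase ⟨l, hln⟩ ∪ low n l :=
            biUnion_b hln hmem hlow
          rw [hR]
          have hdisj : Disjoint (S.erase ⟨l, hln⟩) (low n l) := by
            rw [Finset.disjoint_left]
            intro q hq hqlow
            have hq1 := hlow q (Finset.mem_of_mem_erase hq)
            have := mem_low.mp hqlow
            omega
          have hfvR : fval (S.erase ⟨l, hln⟩ ∪ low n l) + 1 = fval S := by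
            rw [fval_union hdisj, fval_low (le_of_lt hln)]
            have h1 := fval_erase hmem
            have h2 := Nat.one_le_two_pow (n := l)
            simp only at h1
            omega
          constructor
          · exact phi_le_of (by omega)
          · intro hc
            obtain ⟨q1, hq1, hq1ne⟩ := Finset.exists_mem_ne (show 1 < S.card by omega) (⟨l, hln⟩ : Fin n)
            have hq1R : q1 ∈ S.erase ⟨l, hln⟩ ∪ low n l :=
              Finset.mem_union_left _ (Finset.mem_erase.mpr ⟨hq1ne, hq1⟩)
            have hzR : z ∈ S.erase ⟨l, hln⟩ ∪ low n l :=
              Finset.mem_union_right _ (mem_low.mpr (by simp [hzdef]; omega))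
            have hq1z : q1 ≠ z := by
              intro h
              have h1 := hlow q1 hq1
              rw [h] at h1
              simp [hzdef] at h1
              omega
            have := card_two_of hq1R hzR hq1z
            omega
        · have hR : S.biUnion (bSpec n l) = S := by
            apply biUnion_id_of
            intro q hq
            unfold bSpec
            have h1 := hlow q hq
            have h2 : (q : ℕ) ≠ l := by
              intro he
              exact hmem (by rwa [show (⟨l, hln⟩ : Fin n) = q from Fin.val_injective (by simp [he])] )
            rw [if_neg (by omega), if_neg h2]
          rw [hR]
          exact ⟨by omega, fun h1 => by omega⟩
    · -- c letter
      have hj2 : 2 ≤ (j : ℕ) := by omega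
      rw [pairSpec_c j hj2]
      set s : Fin n := ⟨(j : ℕ), lt_trans j.isLt i.isLt⟩ with hsdef
      by_cases hz : z ∈ S
      · have hR : S.biUnion (cSpec s i) = S.erase z ∪ {s, i} := biUnion_c hz rfl
        rw [hR]
        have he : fval (S.erase z) + 1 = fval S := by
          have := fval_erase hz
          simpa [hzdef] using this
        have hmono : fval (S.erase z) ≤ fval (S.erase z ∪ {s, i}) :=
          fval_mono Finset.subset_union_left
        constructor
        · exact phi_le_of (by omega)
        · intro hc
          have hsi : s ≠ i := by
            intro h
            have : (s : ℕ) = (i : ℕ) := by rw [h]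
            simp [hsdef] at this
            omega
          have hsR : s ∈ S.erase z ∪ {s, i} := by
            apply Finset.mem_union_right
            simp
          have hiR : i ∈ S.erase z ∪ {s, i} := by
            apply Finset.mem_union_right
            simp
          have := card_two_of hsR hiR hsi
          omega
      · have hR : S.biUnion (cSpec s i) = S :=
          biUnion_id_of (fun q hq => by
            unfold cSpec
            rw [if_neg (fun h0 => hz (by rwa [show q = z from Fin.val_injective (by simp [hzdef, h0])] at hq))])
        rw [hR]
        exact ⟨by omega, fun h1 => by omega⟩


/-! ### auxiliary decode lemmas -/

lemma pairSpec_c' {i : Fin n} (j : Fin (i : ℕ)) (hj : 2 ≤ (j : ℕ)) (s : Fin n)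
    (hs : (s : ℕ) = (j : ℕ)) : pairSpec i j = cSpec s i := by
  rw [pairSpec_c j hj,
    show (⟨(j : ℕ), lt_trans j.isLt i.isLt⟩ : Fin n) = s from Fin.val_injective hs.symm]

lemma pairSpec_b' {i : Fin n} (j : Fin (i : ℕ)) (hj : (j : ℕ) = 1) {l : ℕ}
    (hl : (i : ℕ) - 1 = l) : pairSpec i j = bSpec n l := by
  rw [pairSpec_b j hj, hl]

lemma sync_cons {m : ℕ} {δ : Fin n → Fin m → Finset (Fin n)} {S R : Finset (Fin n)} {a : Fin m}
    {w : List (Fin m)} (h : (S.biUnion fun q => δ q a) = R) (hw : nfaSync δ R w) :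
    nfaSync δ S (a :: w) := by
  unfold nfaSync
  rw [show nfaRun δ S (a :: w) = nfaRun δ (S.biUnion fun q => δ q a) w from rfl, h]
  exact hw

/-! ### upper bound: a word of length `phi S` -/

lemma upper (hn : 3 ≤ n) :
    ∀ (v : ℕ) (S : Finset (Fin n)), fval S = v → 2 ≤ S.card →
      ∃ w : List (Fin (n * (n - 1) / 2 + 1)), nfaSync (delta n) S w ∧ w.length = phi S := by
  intro v
  induction v using Nat.strong_induction_on with
  | _ v IH =>
  intro S hv h2
  have hz' : (0 : ℕ) < n := by omega
  have ho' : (1 : ℕ) < n := by omega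
  set z : Fin n := ⟨0, hz'⟩ with hzdef
  set o : Fin n := ⟨1, ho'⟩ with hodef
  have hzo : z ≠ o := by
    intro h
    have : (0 : ℕ) = 1 := congrArg Fin.val h
    omega
  by_cases hz : z ∈ S
  · by_cases ho : o ∈ S
    · -- use the c1 letter
      set x : T n := Sum.inl ⟨o, ⟨0, by show 0 < 1; omega⟩⟩ with hxdef
      have hdec : decode x = c1Spec o := by
        rw [hxdef, decode_inl]; exact pairSpec_c1 _ rfl rfl
      have hsh : S.biUnion (decode x) = S.erase z ∪ {o} := by
        rw [hdec]; exact biUnion_c1 hz rfl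
      have hounion : S.erase z ∪ {o} = S.erase z := by
        apply Finset.union_eq_left.mpr
        intro y hy
        simp only [Finset.mem_singleton] at hy
        subst hy
        exact Finset.mem_erase.mpr ⟨fun h => hzo h.symm, ho⟩
      by_cases h3 : 2 < S.card
      · have hcard : 2 ≤ (S.erase z).card := by
          rw [Finset.card_erase_of_mem hz]; omega
        have he : fval (S.erase z) + 1 = fval S := by
          have := fval_erase hz; simpa [hzdef] using this
        have hGood : Good (fval S) := good_fval h2
        obtain ⟨w, hws, hwl⟩ := IH (fval (S.erase z)) (by omega) (S.erase z) rfl hcard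
        refine ⟨eqv n x :: w, ?_, ?_⟩
        · exact sync_cons (by rw [biUnion_delta_encode, hsh, hounion]) hws
        · simp only [List.length_cons, hwl]
          unfold phi
          rw [phiN_step he hGood]
      · -- base case : S = {z, o}
        have hSeq : S = {z, o} := by
          have hsub : ({z, o} : Finset (Fin n)) ⊆ S := by
            intro q hq
            simp only [Finset.mem_insert, Finset.mem_singleton] at hq
            rcases hq with rfl | rfl
            · exact hz
            · exact ho
          exact (Finset.eq_of_subset_of_card_le hsub (by rw [Finset.card_pair hzo]; omega)).symm
        have herase : ({z, o} : Finset (Fin n)).erase z = {o} :=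
          Finset.erase_insert (by simp [hzo])
        refine ⟨[eqv n x], ?_, ?_⟩
        · unfold nfaSync
          rw [show nfaRun (delta n) S [eqv n x]
              = nfaRun (delta n) (S.biUnion fun q => delta n q (eqv n x)) [] from rfl]
          rw [biUnion_delta_encode, hsh, hSeq, herase]
          rw [show nfaRun (delta n) ({o} ∪ {o}) [] = {o} ∪ {o} from rfl]
          rw [Finset.union_self]
          exact Finset.card_singleton o
        · simp only [List.length_cons, List.length_nil]
          unfold phi
          rw [hSeq, fval_pair hzo]
          rw [show 2 ^ ((z : Fin n) : ℕ) + 2 ^ ((o : Fin n) : ℕ) = 3 by norm_num [hzdef, hodef]]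
          rw [phiN_three]
    · -- 1 ∉ S
      by_cases h3 : 2 < S.card
      · -- use a c letter
        have hcard : 2 ≤ (S.erase z).card := by
          rw [Finset.card_erase_of_mem hz]; omega
        obtain ⟨a, ha, b, hb, hab⟩ := Finset.one_lt_card.mp (show 1 < (S.erase z).card by omega)
        have hvals : ∀ q ∈ S.erase z, 2 ≤ (q : ℕ) := by
          intro q hq
          obtain ⟨hqz, hqS⟩ := Finset.mem_erase.mp hq
          have h0 : (q : ℕ) ≠ 0 := fun h => hqz (Fin.val_injective (by simp [hzdef, h]))
          have h1 : (q : ℕ) ≠ 1 := fun h =>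
            ho ((show q = o from Fin.val_injective (by simp [hodef, h])) ▸ hqS)
          omega
        obtain ⟨s, t, hsE, htE, hst⟩ :
            ∃ s t, s ∈ S.erase z ∧ t ∈ S.erase z ∧ (s : ℕ) < (t : ℕ) := by
          rcases Nat.lt_or_ge (a : ℕ) (b : ℕ) with h | h
          · exact ⟨a, b, ha, hb, h⟩
          · have hne : (a : ℕ) ≠ (b : ℕ) := fun hv => hab (Fin.val_injective hv)
            exact ⟨b, a, hb, ha, by omega⟩
        have hs2 : 2 ≤ (s : ℕ) := hvals s hsE
        set x : T n := Sum.inl ⟨t, ⟨(s : ℕ), hst⟩⟩ with hxdef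
        have hdec : decode x = cSpec s t := by
          rw [hxdef, decode_inl]
          exact pairSpec_c' _ hs2 s rfl
        have hsh : S.biUnion (decode x) = S.erase z ∪ {s, t} := by
          rw [hdec]; exact biUnion_c hz rfl
        have hstu : S.erase z ∪ {s, t} = S.erase z := by
          apply Finset.union_eq_left.mpr
          intro y hy
          simp only [Finset.mem_insert, Finset.mem_singleton] at hy
          rcases hy with rfl | rfl
          · exact hsE
          · exact htE
        have he : fval (S.erase z) + 1 = fval S := by
          have := fval_erase hz; simpa [hzdef] using this
        have hGood : Good (fval S) := good_fval h2
        obtain ⟨w, hws, hwl⟩ := IH (fval (S.erase z)) (by omega) (S.erase z) rfl hcard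
        refine ⟨eqv n x :: w, ?_, ?_⟩
        · exact sync_cons (by rw [biUnion_delta_encode, hsh, hstu]) hws
        · simp only [List.length_cons, hwl]
          unfold phi
          rw [phiN_step he hGood]
      · -- |S| = 2 : use a d letter
        have hce : (S.erase z).card = 1 := by
          rw [Finset.card_erase_of_mem hz]; omega
        obtain ⟨t, htE⟩ := Finset.card_eq_one.mp hce
        have htE' : t ∈ S.erase z := by rw [htE]; exact Finset.mem_singleton_self t
        have htS : t ∈ S := Finset.mem_of_mem_erase htE'
        have htz : t ≠ z := (Finset.mem_erase.mp htE').1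
        have ht0 : (t : ℕ) ≠ 0 := fun h => htz (Fin.val_injective (by simp [hzdef, h]))
        have ht1 : (t : ℕ) ≠ 1 := fun h =>
          ho ((show t = o from Fin.val_injective (by simp [hodef, h])) ▸ htS)
        have ht2 : 2 ≤ (t : ℕ) := by omega
        have hSeq : S = {z, t} := by
          have h' : S = insert z (S.erase z) := (Finset.insert_erase hz).symm
          rw [h', htE]
        set x : T n := Sum.inl ⟨t, ⟨0, by show 0 < (t : ℕ); omega⟩⟩ with hxdef
        have hdec : decode x = dSpec t := by
          rw [hxdef, decode_inl]; exact pairSpec_d _ rfl ht1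
        have hsh : S.biUnion (decode x) = low n (t : ℕ) := by
          rw [hdec, hSeq]; exact biUnion_d_pair rfl ht2
        have hzt : z ≠ t := fun h => htz h.symm
        have hfvS : fval S = 2 ^ (t : ℕ) + 1 := by
          rw [hSeq, fval_pair hzt]
          simp only [hzdef]
          norm_num
          omega
        have hfvR : fval (low n (t : ℕ)) = 2 ^ (t : ℕ) - 1 := fval_low (le_of_lt t.isLt)
        have hGood : Good (2 ^ (t : ℕ) + 1) := by rw [← hfvS]; exact good_fval h2
        have hcR : 2 ≤ (low n (t : ℕ)).card := by rw [card_low (le_of_lt t.isLt)]; omega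
        have hlt : fval (low n (t : ℕ)) < v := by
          rw [hfvR, ← hv, hfvS]
          have := Nat.one_le_two_pow (n := (t : ℕ))
          omega
        obtain ⟨w, hws, hwl⟩ := IH (fval (low n (t : ℕ))) hlt _ rfl hcR
        refine ⟨eqv n x :: w, ?_, ?_⟩
        · exact sync_cons (by rw [biUnion_delta_encode, hsh]) hws
        · simp only [List.length_cons, hwl]
          unfold phi
          rw [hfvS, hfvR, phiN_dstep hGood]
  · -- 0 ∉ S : use a b letter
    have hSne : S.Nonempty := Finset.card_pos.mp (by omega)
    set lF := S.min' hSne with hlFdef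
    have hmemF : lF ∈ S := S.min'_mem hSne
    have hminF : ∀ q ∈ S, (lF : ℕ) ≤ (q : ℕ) := fun q hq => S.min'_le q hq
    have hl1 : 1 ≤ (lF : ℕ) := by
      rcases Nat.eq_zero_or_pos (lF : ℕ) with h | h
      · exact absurd (by rwa [show z = lF from Fin.val_injective (by simp [hzdef, h])]) hz
      · exact h
    obtain ⟨q1, hq1, hq1ne⟩ :=
      Finset.exists_mem_ne (show 1 < S.card by omega) lF
    have hq1gt : (lF : ℕ) < (q1 : ℕ) := by
      have hge := hminF q1 hq1
      have hne : (q1 : ℕ) ≠ (lF : ℕ) := fun h => hq1ne (Fin.val_injective h)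
      omega
    have hln : (lF : ℕ) < n := lF.isLt
    have hl1n : (lF : ℕ) + 1 < n := by have := q1.isLt; omega
    set x : T n := Sum.inl ⟨⟨(lF : ℕ) + 1, hl1n⟩, ⟨1, by show 1 < (lF : ℕ) + 1; omega⟩⟩
      with hxdef
    have hdec : decode x = bSpec n (lF : ℕ) := by
      rw [hxdef, decode_inl]
      exact pairSpec_b' _ rfl (by simp)
    have hmem' : (⟨(lF : ℕ), hln⟩ : Fin n) ∈ S := by
      rwa [show (⟨(lF : ℕ), hln⟩ : Fin n) = lF from Fin.val_injective rfl]
    have hsh : S.biUnion (decode x) = S.erase ⟨(lF : ℕ), hln⟩ ∪ low n (lF : ℕ) := by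
      rw [hdec]; exact biUnion_b hln hmem' hminF
    have hdisj : Disjoint (S.erase ⟨(lF : ℕ), hln⟩) (low n (lF : ℕ)) := by
      rw [Finset.disjoint_left]
      intro q hq hqlow
      have hq' := hminF q (Finset.mem_of_mem_erase hq)
      have := mem_low.mp hqlow
      omega
    have hfvR : fval (S.erase ⟨(lF : ℕ), hln⟩ ∪ low n (lF : ℕ)) + 1 = fval S := by
      rw [fval_union hdisj, fval_low (le_of_lt hln)]
      have h1 := fval_erase hmem'
      have h2 := Nat.one_le_two_pow (n := (lF : ℕ))
      simp only at h1
      omega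
    have hGood : Good (fval S) := good_fval h2
    have hcR : 2 ≤ (S.erase ⟨(lF : ℕ), hln⟩ ∪ low n (lF : ℕ)).card := by
      have hq1R : q1 ∈ S.erase ⟨(lF : ℕ), hln⟩ ∪ low n (lF : ℕ) := by
        apply Finset.mem_union_left
        apply Finset.mem_erase.mpr
        exact ⟨by rwa [show (⟨(lF : ℕ), hln⟩ : Fin n) = lF from Fin.val_injective rfl], hq1⟩
      have hzR : z ∈ S.erase ⟨(lF : ℕ), hln⟩ ∪ low n (lF : ℕ) := by
        apply Finset.mem_union_right
        apply mem_low.mpr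
        simp only [hzdef]
        omega
      have hq1z : q1 ≠ z := by
        intro h
        have h' : (q1 : ℕ) = 0 := by rw [h, hzdef]
        omega
      exact card_two_of hq1R hzR hq1z
    obtain ⟨w, hws, hwl⟩ := IH (fval (S.erase ⟨(lF : ℕ), hln⟩ ∪ low n (lF : ℕ)))
      (by omega) _ rfl hcR
    refine ⟨eqv n x :: w, ?_, ?_⟩
    · exact sync_cons (by rw [biUnion_delta_encode, hsh]) hws
    · simp only [List.length_cons, hwl]
      unfold phi
      rw [phiN_step hfvR hGood]

/-! ### lower bound -/

lemma lower (hn : 3 ≤ n) :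
    ∀ (w : List (Fin (n * (n - 1) / 2 + 1))) (S : Finset (Fin n)), 2 ≤ S.card →
      nfaSync (delta n) S w → phi S ≤ w.length := by
  intro w
  induction w with
  | nil =>
    intro S h2 hs
    exfalso
    unfold nfaSync nfaRun at hs
    omega
  | cons a w ih =>
    intro S h2 hs
    have hrun : nfaSync (delta n) (S.biUnion fun q => delta n q a) w := hs
    have hbi : (S.biUnion fun q => delta n q a) = S.biUnion (decode ((eqv n).symm a)) :=
      Finset.biUnion_congr rfl (fun q _ => rfl)
    rw [hbi] at hrun
    have hsafe := safety hn ((eqv n).symm a) S h2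
    rcases Nat.lt_or_ge (S.biUnion (decode ((eqv n).symm a))).card 2 with hc | hc
    · have hne : (S.biUnion (decode ((eqv n).symm a))).Nonempty := by
        obtain ⟨q, hq⟩ := Finset.card_pos.mp (show 0 < S.card by omega)
        obtain ⟨y, hy⟩ := decode_nonempty hn ((eqv n).symm a) q
        exact ⟨y, Finset.mem_biUnion.mpr ⟨q, hq, hy⟩⟩
      have hc1 : (S.biUnion (decode ((eqv n).symm a))).card = 1 := by
        have := Finset.card_pos.mpr hne; omega
      have := hsafe.2 hc1
      simp only [List.length_cons]
      omega
    · have h1 := ih (S.biUnion (decode ((eqv n).symm a))) hc hrun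
      have h2' := hsafe.1
      simp only [List.length_cons]
      omega

lemma shortest (hn : 3 ≤ n) (S : Finset (Fin n)) (h2 : 2 ≤ S.card) :
    nfaShortestSync (delta n) S (phi S) := by
  constructor
  · obtain ⟨w, hws, hwl⟩ := upper hn (fval S) S rfl h2
    exact ⟨w, hws, hwl⟩
  · intro w hw
    exact lower hn w S h2 hw

/-! ### values of the witnesses -/

lemma phi_univ (hn : 3 ≤ n) : phi (Finset.univ : Finset (Fin n)) = 2 ^ n - n - 1 := by
  unfold phi
  rw [fval_univ]
  have hpow : 2 ^ n = 2 ^ (n - 1) * 2 := by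
    rw [← pow_succ]; congr 1; omega
  have h1 : 1 ≤ 2 ^ (n - 1) := Nat.one_le_two_pow
  have hnlt : n < 2 ^ n := Nat.lt_two_pow_self (n := n)
  rw [phiN_high (n := n) (by omega) (by omega) (by omega)]
  omega

lemma phi_high_set (hn : 3 ≤ n) {k : ℕ} (hk2 : 2 ≤ k) (hkn : k ≤ n) :
    phi (high n (n - k)) = 2 ^ n - n - 2 ^ (n - k) := by
  unfold phi
  rw [fval_high (by omega)]
  have hpow : 2 ^ n = 2 ^ (n - 1) * 2 := by
    rw [← pow_succ]; congr 1; omega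
  have h1 : 1 ≤ 2 ^ (n - 1) := Nat.one_le_two_pow
  have h2 : 2 ^ (n - k) ≤ 2 ^ (n - 1) := Nat.pow_le_pow_right (by norm_num) (by omega)
  have h3 : 1 ≤ 2 ^ (n - k) := Nat.one_le_two_pow
  have hnlt : n < 2 ^ n := Nat.lt_two_pow_self (n := n)
  rw [phiN_high (n := n) (by omega) (by omega) (by omega)]
  omega

end S3

theorem stmt3 (n : ℕ) (hn : 3 ≤ n) :
    ∃ δ : Fin n → Fin (n * (n - 1) / 2 + 1) → Finset (Fin n),
      (∀ q a, (δ q a).Nonempty) ∧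
      nfaShortestSync δ Finset.univ (2 ^ n - n - 1) ∧
      (∀ k, 2 ≤ k → k ≤ n → ∃ S : Finset (Fin n), S.card = k ∧
        nfaShortestSync δ S (2 ^ n - n - 2 ^ (n - k))) := by
  refine ⟨S3.delta n, ?_, ?_, ?_⟩
  · intro q a
    exact S3.decode_nonempty hn ((S3.eqv n).symm a) q
  · have h := S3.shortest hn Finset.univ
      (by rw [Finset.card_univ, Fintype.card_fin]; omega)
    rwa [S3.phi_univ hn] at h
  · intro k hk2 hkn
    refine ⟨S3.high n (n - k), ?_, ?_⟩
    · rw [S3.card_high]; omega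
    · have h := S3.shortest hn (S3.high n (n - k))
        (by rw [S3.card_high]; omega)
      rwa [S3.phi_high_set hn hk2 hkn] at h
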